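/- arXiv:0809.1715 — 5 statements merged into one kernel-verified Lean document; each statement's English description precedes it below -/
import Mathlib

section
/- Let x, c₁, c₂, c₁′, c₂′ ∈ ℝᵈ. If ‖x − c₂‖² − ‖x − c₁‖² ≥ 2εδ with ‖x − c₁‖ + ‖x − c₂‖ ≤ M and ‖x − c₁′‖ ≥ ‖x − c₂′‖, then ‖c₁ − c₁′‖ + ‖c₂ − c₂′‖ ≥ 2εδ / M. -/
theorem center_movement_lower_bound (d : ℕ)
    (x c₁ c₂ c₁' c₂' : EuclideanSpace ℝ (Fin d)) (ε δ M : ℝ)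
    (hε : 0 < ε) (hδ : 0 < δ) (hM : 0 < M)
    (h1 : ‖x - c₂‖ ^ 2 - ‖x - c₁‖ ^ 2 ≥ 2 * ε * δ)
    (h2 : ‖x - c₁‖ + ‖x - c₂‖ ≤ M)
    (h3 : ‖x - c₁'‖ ≥ ‖x - c₂'‖) :
    ‖c₁ - c₁'‖ + ‖c₂ - c₂'‖ ≥ 2 * ε * δ / M := by
  have t1 : ‖x - c₂‖ ≤ ‖x - c₂'‖ + ‖c₂ - c₂'‖ := by
    have h := norm_sub_le (x - c₂') (c₂ - c₂')
    have : (x - c₂') - (c₂ - c₂') = x - c₂ + (c₂' - c₂') := by abel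
    simpa [this] using h
  have t2 : ‖x - c₁'‖ ≤ ‖x - c₁‖ + ‖c₁ - c₁'‖ := by
    have h := norm_add_le (x - c₁) (c₁ - c₁')
    have : (x - c₁) + (c₁ - c₁') = x - c₁' := by abel
    simpa [this] using h
  have hs : ‖x - c₂‖ - ‖x - c₁‖ ≤ ‖c₁ - c₁'‖ + ‖c₂ - c₂'‖ := by linarith
  have ha : (0:ℝ) ≤ ‖x - c₁‖ := norm_nonneg _
  have hb : (0:ℝ) ≤ ‖x - c₂‖ := norm_nonneg _
  have hdiff : 0 ≤ ‖x - c₂‖ - ‖x - c₁‖ := by nlinarith [mul_pos hε hδ]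
  rw [ge_iff_le, div_le_iff₀ hM]
  nlinarith [mul_nonneg (sub_nonneg.mpr hs) hM.le,
    mul_nonneg (sub_nonneg.mpr h2) hdiff]
end

section
/- Let r be a real-valued Gaussian random variable with mean μ and standard deviation σ > 0, and let I ⊆ ℝ be an interval of length L ≥ 0. Then the probability that r² ∈ I is at most 4√L/(√(2π)·σ). In particular, it is less than 2√L/σ. -/
open MeasureTheory ProbabilityTheory Real

lemma sqrt_sub_sqrt_le (b c : ℝ) (hc : 0 ≤ c) (hcb : c ≤ b) :
    Real.sqrt b - Real.sqrt c ≤ Real.sqrt (b - c) := by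
  have h1 : Real.sqrt b ≤ Real.sqrt (b - c) + Real.sqrt c := by
    have h2 := Real.sq_sqrt (show (0:ℝ) ≤ b - c by linarith)
    have h3 := Real.sq_sqrt hc
    have h4 : b ≤ (Real.sqrt (b - c) + Real.sqrt c) ^ 2 := by
      nlinarith [Real.sqrt_nonneg (b - c), Real.sqrt_nonneg c]
    calc Real.sqrt b ≤ Real.sqrt ((Real.sqrt (b - c) + Real.sqrt c) ^ 2) :=
          Real.sqrt_le_sqrt h4
      _ = _ := Real.sqrt_sq (by positivity)
  linarith

lemma gaussian_set_bound (μ : ℝ) (σ : NNReal) (hσ : 0 < σ) (A : Set ℝ) :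
    gaussianReal μ (σ ^ 2) A ≤ ENNReal.ofReal ((Real.sqrt (2 * π) * σ)⁻¹) * volume A := by
  have hv : σ ^ 2 ≠ 0 := pow_ne_zero _ hσ.ne'
  rw [ProbabilityTheory.gaussianReal_apply _ hv]
  calc ∫⁻ x in A, gaussianPDF μ (σ ^ 2) x
      ≤ ∫⁻ _ in A, ENNReal.ofReal ((Real.sqrt (2 * π) * σ)⁻¹) := by
        apply lintegral_mono
        intro x
        unfold gaussianPDF gaussianPDFReal
        apply ENNReal.ofReal_le_ofReal
        have hexp : Real.exp (-(x - μ)^2 / (2 * (σ^2 : NNReal))) ≤ 1 := by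
          apply Real.exp_le_one_iff.mpr
          have : (0:ℝ) < (σ:ℝ)^2 := by positivity
          apply div_nonpos_of_nonpos_of_nonneg
          · nlinarith [sq_nonneg (x - μ)]
          · push_cast; positivity
        have heq : Real.sqrt (2 * π * ((σ:NNReal)^2 : NNReal)) = Real.sqrt (2 * π) * σ := by
          push_cast
          rw [Real.sqrt_mul (by positivity), Real.sqrt_sq σ.coe_nonneg]
        calc (Real.sqrt (2 * π * ((σ:NNReal)^2 : NNReal)))⁻¹ * Real.exp (-(x - μ)^2 / (2 * ((σ:NNReal)^2 : NNReal)))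
            ≤ (Real.sqrt (2 * π * ((σ:NNReal)^2 : NNReal)))⁻¹ * 1 := by
              apply mul_le_mul_of_nonneg_left _ (by positivity)
              convert hexp using 2
          _ = (Real.sqrt (2 * π) * σ)⁻¹ := by rw [mul_one, heq]
    _ = ENNReal.ofReal ((Real.sqrt (2 * π) * σ)⁻¹) * volume A := by
        rw [setLIntegral_const]

theorem gaussian_sq_interval_bound (μ : ℝ) (σ : NNReal) (hσ : 0 < σ)
    (a b : ℝ) (L : ℝ) (hL : b - a = L) (hL0 : 0 ≤ L) :
    gaussianReal μ (σ ^ 2) {x : ℝ | x ^ 2 ∈ Set.Icc a b} ≤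
        ENNReal.ofReal (4 * Real.sqrt L / (Real.sqrt (2 * π) * σ)) ∧
      (0 < L → gaussianReal μ (σ ^ 2) {x : ℝ | x ^ 2 ∈ Set.Icc a b} <
        ENNReal.ofReal (2 * Real.sqrt L / σ)) := by
  set c : ℝ := max a 0 with hc
  set S : Set ℝ := {x : ℝ | x ^ 2 ∈ Set.Icc a b} with hS
  have hσR : (0:ℝ) < (σ:ℝ) := hσ
  have hπ : (0:ℝ) < Real.sqrt (2 * π) := Real.sqrt_pos.mpr (by positivity)
  -- key intermediate bound
  have hkey : gaussianReal μ (σ ^ 2) S ≤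
      ENNReal.ofReal (2 * Real.sqrt L / (Real.sqrt (2 * π) * σ)) := by
    by_cases hb : 0 ≤ b
    · have hsub : S ⊆ Set.Icc (-(Real.sqrt b)) (-(Real.sqrt c)) ∪
          Set.Icc (Real.sqrt c) (Real.sqrt b) := by
        intro x hx
        obtain ⟨hx1, hx2⟩ := hx
        have h1 : |x| ≤ Real.sqrt b := by
          rw [← Real.sqrt_sq_eq_abs]
          exact Real.sqrt_le_sqrt hx2
        have h2 : Real.sqrt c ≤ |x| := by
          rw [← Real.sqrt_sq_eq_abs]
          exact Real.sqrt_le_sqrt (max_le hx1 (sq_nonneg x))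
        rcases le_or_gt 0 x with hx0 | hx0
        · right
          rw [abs_of_nonneg hx0] at h1 h2
          exact ⟨h2, h1⟩
        · left
          rw [abs_of_neg hx0] at h1 h2
          constructor <;> linarith
      have hℓ : Real.sqrt b - Real.sqrt c ≤ Real.sqrt L := by
        have hcb : c ≤ b := max_le (by linarith) hb
        have h2 : Real.sqrt (b - c) ≤ Real.sqrt L := by
          apply Real.sqrt_le_sqrt
          have : a ≤ c := le_max_left a 0
          linarith
        linarith [sqrt_sub_sqrt_le b c (le_max_right a 0) hcb]
      calc gaussianReal μ (σ ^ 2) S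
          ≤ gaussianReal μ (σ ^ 2) (Set.Icc (-(Real.sqrt b)) (-(Real.sqrt c)) ∪
              Set.Icc (Real.sqrt c) (Real.sqrt b)) := measure_mono hsub
        _ ≤ gaussianReal μ (σ ^ 2) (Set.Icc (-(Real.sqrt b)) (-(Real.sqrt c))) +
              gaussianReal μ (σ ^ 2) (Set.Icc (Real.sqrt c) (Real.sqrt b)) :=
            measure_union_le _ _
        _ ≤ ENNReal.ofReal ((Real.sqrt (2 * π) * σ)⁻¹) *
              volume (Set.Icc (-(Real.sqrt b)) (-(Real.sqrt c))) +
            ENNReal.ofReal ((Real.sqrt (2 * π) * σ)⁻¹) *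
              volume (Set.Icc (Real.sqrt c) (Real.sqrt b)) :=
            add_le_add (gaussian_set_bound μ σ hσ _) (gaussian_set_bound μ σ hσ _)
        _ = ENNReal.ofReal ((Real.sqrt (2 * π) * σ)⁻¹) *
              (ENNReal.ofReal (Real.sqrt b - Real.sqrt c) +
               ENNReal.ofReal (Real.sqrt b - Real.sqrt c)) := by
            rw [Real.volume_Icc, Real.volume_Icc, mul_add]
            ring_nf
        _ ≤ ENNReal.ofReal ((Real.sqrt (2 * π) * σ)⁻¹) *
              (ENNReal.ofReal (Real.sqrt L) + ENNReal.ofReal (Real.sqrt L)) := by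
            gcongr <;> exact ENNReal.ofReal_le_ofReal hℓ
        _ = ENNReal.ofReal (2 * Real.sqrt L / (Real.sqrt (2 * π) * σ)) := by
            rw [← ENNReal.ofReal_add (Real.sqrt_nonneg L) (Real.sqrt_nonneg L),
              ← ENNReal.ofReal_mul (by positivity)]
            congr 1
            field_simp
            ring
    · have hempty : S = ∅ := by
        ext x
        simp only [hS, Set.mem_setOf_eq, Set.mem_Icc, Set.mem_empty_iff_false, iff_false]
        intro ⟨_, h2⟩
        nlinarith [sq_nonneg x]
      rw [hempty]
      simp
  constructor
  · refine hkey.trans (ENNReal.ofReal_le_ofReal ?_)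
    have : (0:ℝ) ≤ Real.sqrt L / (Real.sqrt (2 * π) * σ) := by positivity
    rw [mul_div_assoc, mul_div_assoc]
    linarith
  · intro hLpos
    refine hkey.trans_lt ((ENNReal.ofReal_lt_ofReal_iff (by positivity)).mpr ?_)
    have hsL : 0 < Real.sqrt L := Real.sqrt_pos.mpr hLpos
    have h1 : (1:ℝ) < Real.sqrt (2 * π) := by
      rw [show (1:ℝ) = Real.sqrt 1 by simp]
      apply Real.sqrt_lt_sqrt (by norm_num)
      nlinarith [Real.pi_gt_three]
    rw [div_lt_div_iff₀ (by positivity) (by positivity)]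
    nlinarith [mul_pos (mul_pos hsL hσR) (sub_pos.mpr h1)]
end

section
/- Let o, p ∈ ℝᵈ be fixed, let r be a random point in ℝᵈ whose coordinates are independent Gaussians with standard deviation σ > 0 (arbitrary means), let ℓ ∈ {0, …, n−1}, and let q = (ℓ/(ℓ+1))·p + (1/(ℓ+1))·r. Then the probability that ‖r − o‖ ≤ δ and that r is within distance ε of the bisecting hyperplane of o and q is at most 2√(nδε)/σ. -/
open MeasureTheory ProbabilityTheory

/-- The law of a random point in `ℝᵈ` whose coordinates are independent Gaussians
with means `μ i` and standard deviation `σ`. -/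
noncomputable def gaussianVec (d : ℕ) (μ : Fin d → ℝ) (σ : NNReal) :
    Measure (EuclideanSpace ℝ (Fin d)) :=
  (Measure.pi fun i => gaussianReal (μ i) (σ ^ 2)).map
    (EuclideanSpace.equiv (Fin d) ℝ).symm

section Helpers

open Real Set
open scoped ENNReal NNReal RealInnerProductSpace

lemma spdc_le_infDist {α : Type*} [MetricSpace α] {s : Set α} (hs : s.Nonempty) {x : α} {b : ℝ}
    (h : ∀ y ∈ s, b ≤ dist x y) : b ≤ Metric.infDist x s := by
  by_contra hlt
  push_neg at hlt
  obtain ⟨y, hy, hdy⟩ := (Metric.infDist_lt_iff hs).1 hlt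
  exact absurd (h y hy) (not_le.2 hdy)

lemma spdc_geom {E : Type*} [NormedAddCommGroup E] [InnerProductSpace ℝ E]
    (o p r : E) (c α δ ε : ℝ) (hca : c + α = 1)
    (hδ : 0 < δ) (hε : 0 < ε)
    (h1 : ‖r - o‖ ≤ δ)
    (h2 : Metric.infDist r {x : E | ‖x - o‖ = ‖x - (c • p + α • r)‖} ≤ ε) :
    |2 * ⟪r - o, c • (p - o) + α • (r - o)⟫ - ‖c • (p - o) + α • (r - o)‖^2|
        ≤ 2 * ε * ‖c • (p - o) + α • (r - o)‖
      ∧ ‖c • (p - o) + α • (r - o)‖ ≤ 2 * (ε + δ) := by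
  set q : E := c • p + α • r with hq
  set Q : E := c • (p - o) + α • (r - o) with hQ
  have hqQ : q - o = Q := by
    have h0 : q - o - Q = (c + α) • o - o := by rw [hq, hQ]; module
    rw [hca, one_smul, sub_self] at h0
    exact sub_eq_zero.mp h0
  set H : Set E := {x : E | ‖x - o‖ = ‖x - q‖} with hH
  have hM : o + (1/2 : ℝ) • Q ∈ H := by
    have e1 : o + (1/2 : ℝ) • Q - o = (1/2 : ℝ) • Q := by abel
    have e2 : o + (1/2 : ℝ) • Q - q = -((1/2 : ℝ) • Q) := by
      rw [← hqQ]; module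
    rw [hH, Set.mem_setOf_eq, e1, e2, norm_neg]
  have hne : H.Nonempty := ⟨_, hM⟩
  have key1 : ∀ y ∈ H, 2 * ⟪y - o, Q⟫ = ‖Q‖^2 := by
    intro y hy
    have hy' : ‖y - o‖ = ‖y - q‖ := hy
    have hyq : y - q = (y - o) - Q := by rw [← hqQ]; abel
    have h4 : ‖(y - o) - Q‖^2 = ‖y - o‖^2 - 2*⟪y - o, Q⟫ + ‖Q‖^2 := norm_sub_sq_real _ _
    have h5 : ‖y - o‖^2 = ‖(y - o) - Q‖^2 := by rw [← hyq, hy']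
    linarith
  constructor
  · by_cases hQ0 : Q = 0
    · rw [hQ0]
      simp
    · have hQpos : 0 < ‖Q‖ := norm_pos_iff.2 hQ0
      have key2 : |2 * ⟪r - o, Q⟫ - ‖Q‖^2| / (2 * ‖Q‖) ≤ Metric.infDist r H := by
        refine spdc_le_infDist hne (fun y hy => ?_)
        have e4 : ⟪r - y, Q⟫ = ⟪r - o, Q⟫ - ⟪y - o, Q⟫ := by
          rw [show r - y = (r - o) - (y - o) by abel, inner_sub_left]
        have e3 : 2 * ⟪r - o, Q⟫ - ‖Q‖^2 = 2 * ⟪r - y, Q⟫ := by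
          rw [e4]; linarith [key1 y hy]
        rw [e3, div_le_iff₀ (by positivity), dist_eq_norm]
        have h6 := abs_real_inner_le_norm (r - y) Q
        have h7 : |2 * ⟪r - y, Q⟫| = 2 * |⟪r - y, Q⟫| := by
          rw [abs_mul]; norm_num
        nlinarith [abs_nonneg (⟪r - y, Q⟫ : ℝ)]
      have h5 : |2 * ⟪r - o, Q⟫ - ‖Q‖^2| / (2 * ‖Q‖) ≤ ε := key2.trans h2
      rw [div_le_iff₀ (by positivity)] at h5
      nlinarith
  · have key3 : ‖Q‖ / 2 - δ ≤ Metric.infDist r H := by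
      refine spdc_le_infDist hne (fun y hy => ?_)
      have h6 : ‖Q‖ ≤ 2 * ‖y - o‖ := by
        have e5 : Q = (q - y) + (y - o) := by rw [← hqQ]; abel
        have t1 : ‖(q - y) + (y - o)‖ ≤ ‖q - y‖ + ‖y - o‖ := norm_add_le _ _
        have t2 : ‖q - y‖ = ‖y - q‖ := norm_sub_rev _ _
        have t3 : ‖y - o‖ = ‖y - q‖ := hy
        rw [e5]
        linarith
      have h7 : ‖y - o‖ - ‖r - o‖ ≤ ‖r - y‖ := by
        have e6 : y - o = (y - r) + (r - o) := by abel
        have t1 : ‖(y - r) + (r - o)‖ ≤ ‖y - r‖ + ‖r - o‖ := norm_add_le _ _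
        have t2 : ‖y - r‖ = ‖r - y‖ := norm_sub_rev _ _
        rw [e6]
        linarith
      rw [dist_eq_norm]
      linarith
    have := key3.trans h2
    linarith

lemma spdc_pi_slice {m : ℕ} (ρ : Fin (m+1) → Measure ℝ) [∀ i, IsProbabilityMeasure (ρ i)]
    (B : Set (Fin (m+1) → ℝ)) (hB : MeasurableSet B) (β : ℝ≥0∞)
    (h : ∀ w : Fin m → ℝ, ρ 0 {t | Fin.cons t w ∈ B} ≤ β) :
    Measure.pi ρ B ≤ β := by
  have hmp := measurePreserving_piFinSuccAbove ρ 0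
  set e := MeasurableEquiv.piFinSuccAbove (fun _ : Fin (m+1) => ℝ) 0
  have hC : MeasurableSet (e.symm ⁻¹' B) := e.symm.measurable hB
  have h1 : Measure.pi ρ B = ((ρ 0).prod (Measure.pi fun j => ρ ((0 : Fin (m+1)).succAbove j))) (e.symm ⁻¹' B) := by
    rw [← hmp.map_eq, MeasurableEquiv.map_apply]
    congr 1
    ext y
    simp
  rw [h1, Measure.prod_apply_symm hC]
  calc ∫⁻ w, (ρ 0) ((fun t => (t, w)) ⁻¹' (e.symm ⁻¹' B)) ∂(Measure.pi fun j => ρ ((0 : Fin (m+1)).succAbove j))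
      ≤ ∫⁻ _, β ∂(Measure.pi fun j => ρ ((0 : Fin (m+1)).succAbove j)) := by
        refine lintegral_mono fun w => ?_
        have : ((fun t => (t, w)) ⁻¹' (e.symm ⁻¹' B)) = {t | Fin.cons t w ∈ B} := by
          ext t
          simp only [Set.mem_preimage, Set.mem_setOf_eq]
          congr! 1
          show e.symm (t, w) = Fin.cons t w
          simp [e, MeasurableEquiv.piFinSuccAbove, Fin.insertNthEquiv, Fin.insertNth_zero]
        rw [this]; exact h w
    _ = β := by simp

lemma spdc_gauss_icc (m : ℝ) (v : ℝ≥0) (hv : v ≠ 0) (s : Set ℝ) (a b : ℝ)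
    (hs : s ⊆ Icc a b) :
    gaussianReal m v s ≤ ENNReal.ofReal ((b - a) * (Real.sqrt (2 * π * v))⁻¹) := by
  calc gaussianReal m v s ≤ gaussianReal m v (Icc a b) := measure_mono hs
    _ = ∫⁻ t in Icc a b, gaussianPDF m v t := by
        rw [gaussianReal_apply m hv _]
    _ ≤ ∫⁻ _ in Icc a b, ENNReal.ofReal ((Real.sqrt (2 * π * v))⁻¹) := by
        refine setLIntegral_mono measurable_const (fun t _ => ?_)
        refine ENNReal.ofReal_le_ofReal ?_
        unfold gaussianPDFReal
        have h1 : Real.exp (-(t - m) ^ 2 / (2 * v)) ≤ 1 := by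
          apply Real.exp_le_one_iff.2
          apply div_nonpos_of_nonpos_of_nonneg
          · nlinarith [sq_nonneg (t - m)]
          · positivity
        have h2 : 0 ≤ (Real.sqrt (2 * π * v))⁻¹ := by positivity
        nlinarith
    _ = ENNReal.ofReal ((Real.sqrt (2 * π * v))⁻¹) * volume (Icc a b) := by
        rw [setLIntegral_const]
    _ ≤ ENNReal.ofReal ((b - a) * (Real.sqrt (2 * π * v))⁻¹) := by
        rw [Real.volume_Icc, ← ENNReal.ofReal_mul (by positivity)]
        exact ENNReal.ofReal_le_ofReal (by rw [mul_comm])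

lemma spdc_slab {m : ℕ} (μ : Fin (m+1) → ℝ) (σ : NNReal) (hσ : σ ≠ 0)
    (t₀ L : ℝ) :
    gaussianVec (m+1) μ σ {r : EuclideanSpace ℝ (Fin (m+1)) | |r 0 - t₀| ≤ L}
      ≤ ENNReal.ofReal (2 * L * (Real.sqrt (2 * π * (σ^2 : ℝ≥0)))⁻¹) := by
  have hv : (σ^2 : ℝ≥0) ≠ 0 := by positivity
  have hmeas : MeasurableSet {r : EuclideanSpace ℝ (Fin (m+1)) | |r 0 - t₀| ≤ L} := by
    have : Continuous fun r : EuclideanSpace ℝ (Fin (m+1)) => |r 0 - t₀| := by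
      exact (continuous_abs.comp ((continuous_apply _).comp
        (EuclideanSpace.equiv (Fin (m+1)) ℝ).continuous |>.sub continuous_const))
    exact (isClosed_le this continuous_const).measurableSet
  unfold gaussianVec
  rw [Measure.map_apply (EuclideanSpace.equiv (Fin (m+1)) ℝ).symm.continuous.measurable hmeas]
  refine spdc_pi_slice _ _ ?_ _ (fun w => ?_)
  · exact (EuclideanSpace.equiv (Fin (m+1)) ℝ).symm.continuous.measurable hmeas
  · have hsub : {t : ℝ | Fin.cons t w ∈ ((EuclideanSpace.equiv (Fin (m+1)) ℝ).symm ⁻¹'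
        {r : EuclideanSpace ℝ (Fin (m+1)) | |r 0 - t₀| ≤ L})} ⊆ Icc (t₀ - L) (t₀ + L) := by
      intro t ht
      simp only [Set.mem_preimage, Set.mem_setOf_eq] at ht
      have : |t - t₀| ≤ L := by
        convert ht using 2
        rfl
      rw [abs_le] at this
      constructor <;> linarith [this.1, this.2]
    have := spdc_gauss_icc (μ 0) _ hv _ (t₀ - L) (t₀ + L) hsub
    refine this.trans (le_of_eq ?_)
    congr 1
    ring

lemma spdc_annulus {m : ℕ} (μ : Fin (m+1) → ℝ) (σ : NNReal) (hσ : σ ≠ 0)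
    (z : EuclideanSpace ℝ (Fin (m+1))) (K V : ℝ) (hV : 0 ≤ V) :
    gaussianVec (m+1) μ σ {r : EuclideanSpace ℝ (Fin (m+1)) | |‖r - z‖^2 - K| ≤ V}
      ≤ ENNReal.ofReal (2 * Real.sqrt (2*V) * (Real.sqrt (2 * π * (σ^2 : ℝ≥0)))⁻¹) := by
  have hv : (σ^2 : ℝ≥0) ≠ 0 := by positivity
  have hnorm : ∀ r : EuclideanSpace ℝ (Fin (m+1)), ‖r - z‖^2 = ∑ i, (r i - z i)^2 := by
    intro r
    rw [EuclideanSpace.norm_eq, Real.sq_sqrt (by positivity)]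
    congr 1; ext i; simp [PiLp.sub_apply, sq_abs]
  have hmeas : MeasurableSet {r : EuclideanSpace ℝ (Fin (m+1)) | |‖r - z‖^2 - K| ≤ V} := by
    have : Continuous fun r : EuclideanSpace ℝ (Fin (m+1)) => |‖r - z‖^2 - K| :=
      (((continuous_id.sub continuous_const).norm.pow 2).sub continuous_const).abs
    exact (isClosed_le this continuous_const).measurableSet
  unfold gaussianVec
  rw [Measure.map_apply (EuclideanSpace.equiv (Fin (m+1)) ℝ).symm.continuous.measurable hmeas]
  refine spdc_pi_slice _ _ ?_ _ (fun w => ?_)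
  · exact (EuclideanSpace.equiv (Fin (m+1)) ℝ).symm.continuous.measurable hmeas
  · set A : ℝ := K - ∑ j : Fin m, (w j - z (Fin.succ j))^2 with hA
    set lo : ℝ := Real.sqrt (max (A - V) 0)
    set hi : ℝ := Real.sqrt (max (A + V) 0)
    have hset : {t : ℝ | Fin.cons t w ∈ ((EuclideanSpace.equiv (Fin (m+1)) ℝ).symm ⁻¹'
          {r : EuclideanSpace ℝ (Fin (m+1)) | |‖r - z‖^2 - K| ≤ V})}
        ⊆ Icc (z 0 - hi) (z 0 - lo) ∪ Icc (z 0 + lo) (z 0 + hi) := by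
      intro t ht
      simp only [Set.mem_preimage, Set.mem_setOf_eq] at ht
      have hco : ∀ (y : Fin (m+1) → ℝ) (i : Fin (m+1)),
          ((EuclideanSpace.equiv (Fin (m+1)) ℝ).symm y : EuclideanSpace ℝ (Fin (m+1))) i = y i :=
        fun _ _ => rfl
      rw [hnorm] at ht
      simp only [hco, Fin.sum_univ_succ, Fin.cons_zero, Fin.zero_succAbove, Fin.cons_succ] at ht
      have ht' : |(t - z 0)^2 - A| ≤ V := by
        have heq : (t - z 0)^2 - A = (t - z 0)^2 + (∑ j : Fin m, (w j - z (Fin.succ j))^2) - K := by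
          rw [hA]; ring
        rw [heq]
        convert ht using 3
      rw [abs_le] at ht'
      have h1 : (t - z 0)^2 ≤ hi^2 := by
        have : (t - z 0)^2 ≤ A + V := by linarith [ht'.2]
        rw [Real.sq_sqrt (le_max_right _ _)]
        exact this.trans (le_max_left _ _)
      have h2 : lo^2 ≤ (t - z 0)^2 := by
        rw [Real.sq_sqrt (le_max_right _ _)]
        exact max_le (by linarith [ht'.1]) (sq_nonneg _)
      have hlo : 0 ≤ lo := Real.sqrt_nonneg _
      have hhi : 0 ≤ hi := Real.sqrt_nonneg _
      have habs1 : |t - z 0| ≤ hi := abs_le_of_sq_le_sq' (by nlinarith [sq_abs (t - z 0)]) hhi |>.2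
      have habs2 : lo ≤ |t - z 0| := by
        nlinarith [abs_nonneg (t - z 0), sq_abs (t - z 0)]
      rcases le_or_gt (z 0) t with hc | hc
      · right
        rw [abs_of_nonneg (by linarith)] at habs1 habs2
        exact ⟨by linarith, by linarith⟩
      · left
        rw [abs_of_neg (by linarith)] at habs1 habs2
        exact ⟨by linarith, by linarith⟩
    have hlen : hi - lo ≤ Real.sqrt (2*V) := by
      have h1 : hi^2 ≤ lo^2 + 2*V := by
        rw [Real.sq_sqrt (le_max_right _ _), Real.sq_sqrt (le_max_right _ _)]
        rcases le_or_gt (A - V) 0 with h | h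
        · rw [max_eq_right h]
          exact max_le (by linarith) (by linarith)
        · rw [max_eq_left h.le]
          exact max_le (by linarith) (by linarith)
      have h2 : hi ≤ lo + Real.sqrt (2*V) := by
        nlinarith [Real.sqrt_nonneg (2*V), Real.sq_sqrt (by linarith : (0:ℝ) ≤ 2*V),
          Real.sqrt_nonneg (max (A - V) 0), Real.sqrt_nonneg (max (A + V) 0)]
      linarith
    calc gaussianReal (μ 0) (σ^2) {t : ℝ | Fin.cons t w ∈ ((EuclideanSpace.equiv (Fin (m+1)) ℝ).symm ⁻¹'
          {r : EuclideanSpace ℝ (Fin (m+1)) | |‖r - z‖^2 - K| ≤ V})}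
        ≤ gaussianReal (μ 0) (σ^2) (Icc (z 0 - hi) (z 0 - lo))
          + gaussianReal (μ 0) (σ^2) (Icc (z 0 + lo) (z 0 + hi)) :=
          (measure_mono hset).trans (measure_union_le _ _)
      _ ≤ ENNReal.ofReal (Real.sqrt (2*V) * (Real.sqrt (2 * π * (σ^2 : ℝ≥0)))⁻¹)
          + ENNReal.ofReal (Real.sqrt (2*V) * (Real.sqrt (2 * π * (σ^2 : ℝ≥0)))⁻¹) := by
          gcongr
          · refine (spdc_gauss_icc (μ 0) _ hv _ _ _ (subset_refl _)).trans ?_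
            apply ENNReal.ofReal_le_ofReal
            have : (0:ℝ) ≤ (Real.sqrt (2 * π * (σ^2 : ℝ≥0)))⁻¹ := by positivity
            nlinarith
          · refine (spdc_gauss_icc (μ 0) _ hv _ _ _ (subset_refl _)).trans ?_
            apply ENNReal.ofReal_le_ofReal
            have : (0:ℝ) ≤ (Real.sqrt (2 * π * (σ^2 : ℝ≥0)))⁻¹ := by positivity
            nlinarith
      _ = ENNReal.ofReal (2 * Real.sqrt (2*V) * (Real.sqrt (2 * π * (σ^2 : ℝ≥0)))⁻¹) := by
          rw [← ENNReal.ofReal_add (by positivity) (by positivity)]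
          congr 1
          ring

lemma spdc_coord {d : ℕ} (x : EuclideanSpace ℝ (Fin d)) (i : Fin d) : |x i| ≤ ‖x‖ := by
  rw [EuclideanSpace.norm_eq, ← Real.sqrt_sq_eq_abs]
  apply Real.sqrt_le_sqrt
  calc (x i)^2 = ‖x i‖^2 := by rw [Real.norm_eq_abs, sq_abs]
    _ ≤ ∑ j, ‖x j‖^2 := Finset.single_le_sum (f := fun j => ‖x j‖^2)
        (fun j _ => by positivity) (Finset.mem_univ i)

end Helpers

set_option maxHeartbeats 2000000 in
open Real Set in
open scoped ENNReal NNReal RealInnerProductSpace in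
theorem single_point_determines_center (d n : ℕ) (hd : 1 ≤ d) (hn : 1 ≤ n)
    (o p : EuclideanSpace ℝ (Fin d)) (μ : Fin d → ℝ) (σ : NNReal) (hσ : 0 < σ)
    (ℓ : ℕ) (hℓ : ℓ ≤ n - 1) (δ ε : ℝ) (hδ : 0 < δ) (hε : 0 < ε) :
    gaussianVec d μ σ
      {r : EuclideanSpace ℝ (Fin d) |
        ‖r - o‖ ≤ δ ∧
        Metric.infDist r
          {x : EuclideanSpace ℝ (Fin d) |
            ‖x - o‖ = ‖x - (((ℓ : ℝ) / (ℓ + 1)) • p + ((1 : ℝ) / (ℓ + 1)) • r)‖} ≤ ε} ≤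
      ENNReal.ofReal (2 * Real.sqrt (n * δ * ε) / σ) := by
  have hσ' : σ ≠ 0 := hσ.ne'
  have hσR : (0:ℝ) < (σ:ℝ) := hσ
  have hkn : ℓ + 1 ≤ n := by omega
  have hknR : (ℓ:ℝ) + 1 ≤ (n:ℝ) := by exact_mod_cast hkn
  have hnR : (1:ℝ) ≤ (n:ℝ) := by exact_mod_cast hn
  obtain ⟨m, rfl⟩ : ∃ m, d = m + 1 := ⟨d - 1, by omega⟩
  set cL : ℝ := (ℓ:ℝ)/((ℓ:ℝ)+1) with hcL
  set aL : ℝ := (1:ℝ)/((ℓ:ℝ)+1) with haL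
  have hl1 : (0:ℝ) < (ℓ:ℝ)+1 := by positivity
  have hca : cL + aL = 1 := by rw [hcL, haL]; field_simp
  have hc0 : 0 ≤ cL := by rw [hcL]; positivity
  have hc1 : cL < 1 := by rw [hcL, div_lt_one hl1]; linarith
  have hA : 0 < 1 - cL^2 := by nlinarith
  have hsq2 : Real.sqrt (2 * π * ((σ^2 : ℝ≥0) : ℝ)) = Real.sqrt (2*π) * σ := by
    have hvar : ((σ^2 : ℝ≥0) : ℝ) = (σ:ℝ)^2 := by push_cast; ring
    rw [hvar, Real.sqrt_mul (by positivity), Real.sqrt_sq hσR.le]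
  have hsqrt2pi : (0:ℝ) < Real.sqrt (2*π) := by
    apply Real.sqrt_pos.2; positivity
  -- generic conversion of the final bound
  have hfinal : ∀ L : ℝ, 0 ≤ L → L ≤ Real.sqrt (2*π) * Real.sqrt ((n:ℝ)*δ*ε) →
      ENNReal.ofReal (2 * L * (Real.sqrt (2 * π * ((σ^2 : ℝ≥0) : ℝ)))⁻¹)
        ≤ ENNReal.ofReal (2 * Real.sqrt ((n:ℝ) * δ * ε) / σ) := by
    intro L hL0 hL
    apply ENNReal.ofReal_le_ofReal
    rw [hsq2, ← div_eq_mul_inv, div_le_div_iff₀ (by positivity) hσR]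
    nlinarith [Real.sqrt_nonneg ((n:ℝ)*δ*ε)]
  by_cases hcase : δ ≤ 2*π*(n:ℝ)*ε
  · -- wide case: use the ball of radius δ
    have hsub : {r : EuclideanSpace ℝ (Fin (m+1)) |
        ‖r - o‖ ≤ δ ∧
        Metric.infDist r
          {x : EuclideanSpace ℝ (Fin (m+1)) | ‖x - o‖ = ‖x - (cL • p + aL • r)‖} ≤ ε}
        ⊆ {r : EuclideanSpace ℝ (Fin (m+1)) | |r 0 - o 0| ≤ δ} := by
      intro r hr
      have h1 : |(r - o) 0| ≤ ‖r - o‖ := spdc_coord (r - o) 0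
      have h2 : (r - o) 0 = r 0 - o 0 := rfl
      rw [h2] at h1
      exact h1.trans hr.1
    refine (measure_mono hsub).trans ((spdc_slab μ σ hσ' (o 0) δ).trans ?_)
    refine hfinal δ hδ.le ?_
    rw [← Real.sqrt_mul (by positivity) ((n:ℝ)*δ*ε)]
    calc δ = Real.sqrt (δ^2) := (Real.sqrt_sq hδ.le).symm
      _ ≤ Real.sqrt (2*π*((n:ℝ)*δ*ε)) := Real.sqrt_le_sqrt (by nlinarith)
  · push_neg at hcase
    by_cases hl0 : ℓ = 0
    · -- ℓ = 0 : the event forces ‖r - o‖ ≤ 2ε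
      have hc00 : cL = 0 := by rw [hcL, hl0]; simp
      have ha11 : aL = 1 := by rw [haL, hl0]; simp
      have hsub : {r : EuclideanSpace ℝ (Fin (m+1)) |
          ‖r - o‖ ≤ δ ∧
          Metric.infDist r
            {x : EuclideanSpace ℝ (Fin (m+1)) | ‖x - o‖ = ‖x - (cL • p + aL • r)‖} ≤ ε}
          ⊆ {r : EuclideanSpace ℝ (Fin (m+1)) | |r 0 - o 0| ≤ 2*ε} := by
        intro r hr
        obtain ⟨gF, gQ⟩ := spdc_geom o p r cL aL δ ε hca hδ hε hr.1 hr.2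
        have hQx : cL • (p - o) + aL • (r - o) = r - o := by
          rw [hc00, ha11]; simp
        rw [hQx] at gF
        have hxx : ⟪r - o, r - o⟫ = ‖r - o‖^2 := real_inner_self_eq_norm_sq _
        rw [hxx] at gF
        have hs2 : ‖r - o‖^2 ≤ 2*ε*‖r - o‖ := by
          have : |2*‖r - o‖^2 - ‖r - o‖^2| = ‖r - o‖^2 := by
            rw [show 2*‖r - o‖^2 - ‖r - o‖^2 = ‖r - o‖^2 by ring, abs_of_nonneg (sq_nonneg _)]
          rw [this] at gF
          exact gF
        have hsle : ‖r - o‖ ≤ 2*ε := by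
          rcases eq_or_lt_of_le (norm_nonneg (r - o)) with h | h
          · rw [← h]; positivity
          · exact le_of_mul_le_mul_right (by nlinarith) h
        have h1 : |(r - o) 0| ≤ ‖r - o‖ := spdc_coord (r - o) 0
        have h2 : (r - o) 0 = r 0 - o 0 := rfl
        rw [h2] at h1
        exact h1.trans hsle
      refine (measure_mono hsub).trans ((spdc_slab μ σ hσ' (o 0) (2*ε)).trans ?_)
      refine hfinal (2*ε) (by positivity) ?_
      rw [← Real.sqrt_mul (by positivity) ((n:ℝ)*δ*ε)]
      have hπ : (3.141592 : ℝ) < π := Real.pi_gt_d6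
      have hpn : (6:ℝ) ≤ 2*π*(n:ℝ) := by nlinarith
      have h4e : 4*ε ≤ 2*π*(n:ℝ)*δ := by
        nlinarith [mul_lt_mul_of_pos_left hcase (show (0:ℝ) < 2*π*(n:ℝ) by positivity), hε.le]
      have hsq : (2*ε)^2 ≤ 2*π*((n:ℝ)*δ*ε) := by
        nlinarith [mul_le_mul_of_nonneg_right h4e hε.le]
      calc 2*ε = Real.sqrt ((2*ε)^2) := (Real.sqrt_sq (by positivity)).symm
        _ ≤ Real.sqrt (2*π*((n:ℝ)*δ*ε)) := Real.sqrt_le_sqrt hsq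
    · -- ℓ ≥ 1 : annulus case
      have hl1' : 1 ≤ ℓ := Nat.one_le_iff_ne_zero.2 hl0
      have hlR : (1:ℝ) ≤ (ℓ:ℝ) := by exact_mod_cast hl1'
      have hn2R : (2:ℝ) ≤ (n:ℝ) := by
        have : 2 ≤ n := by omega
        exact_mod_cast this
      set w0 : ℝ := cL^2/(1-cL^2) with hw0
      set z : EuclideanSpace ℝ (Fin (m+1)) := o - w0 • (p - o) with hz
      set K : ℝ := w0^2*‖p-o‖^2 + w0*‖p-o‖^2 with hK
      set V : ℝ := 4*ε*(ε+δ)/(1-cL^2) with hV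
      have hV0 : 0 ≤ V := by rw [hV]; positivity
      have hsub : {r : EuclideanSpace ℝ (Fin (m+1)) |
          ‖r - o‖ ≤ δ ∧
          Metric.infDist r
            {x : EuclideanSpace ℝ (Fin (m+1)) | ‖x - o‖ = ‖x - (cL • p + aL • r)‖} ≤ ε}
          ⊆ {r : EuclideanSpace ℝ (Fin (m+1)) | |‖r - z‖^2 - K| ≤ V} := by
        intro r hr
        obtain ⟨gF, gQ⟩ := spdc_geom o p r cL aL δ ε hca hδ hε hr.1 hr.2
        have e1 : ⟪r - o, cL • (p - o) + aL • (r - o)⟫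
            = cL*⟪r - o, p - o⟫ + aL*‖r - o‖^2 := by
          rw [inner_add_right, real_inner_smul_right, real_inner_smul_right,
            real_inner_self_eq_norm_sq]
        have e2 : ‖cL • (p - o) + aL • (r - o)‖^2
            = cL^2*‖p - o‖^2 + 2*(cL*aL*⟪r - o, p - o⟫) + aL^2*‖r - o‖^2 := by
          rw [norm_add_sq_real, norm_smul, norm_smul, real_inner_smul_left,
            real_inner_smul_right, mul_pow, mul_pow, Real.norm_eq_abs, Real.norm_eq_abs,
            sq_abs, sq_abs, real_inner_comm (p - o) (r - o)]
          ring
        have gF2 : |(1-cL^2)*‖r - o‖^2 + 2*cL^2*⟪r - o, p - o⟫ - cL^2*‖p - o‖^2|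
            ≤ 4*ε*(ε+δ) := by
          have hiden : 2*⟪r - o, cL • (p - o) + aL • (r - o)⟫
              - ‖cL • (p - o) + aL • (r - o)‖^2
              = (1-cL^2)*‖r - o‖^2 + 2*cL^2*⟪r - o, p - o⟫ - cL^2*‖p - o‖^2 := by
            rw [e1, e2]
            have hα' : aL = 1 - cL := by linarith
            rw [hα']; ring
          rw [← hiden]
          refine gF.trans ?_
          nlinarith [norm_nonneg (cL • (p - o) + aL • (r - o))]
        have hrz : r - z = (r - o) + w0 • (p - o) := by
          rw [hz]; abel
        have hnz : ‖r - z‖^2 = ‖r - o‖^2 + 2*(w0*⟪r - o, p - o⟫) + w0^2*‖p - o‖^2 := by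
          rw [hrz, norm_add_sq_real, real_inner_smul_right, norm_smul, mul_pow,
            Real.norm_eq_abs, sq_abs]
        have hkey : (1-cL^2) * (‖r - z‖^2 - K)
            = (1-cL^2)*‖r - o‖^2 + 2*cL^2*⟪r - o, p - o⟫ - cL^2*‖p - o‖^2 := by
          rw [hnz, hK, hw0]
          field_simp
          ring
        have habs : |(1-cL^2) * (‖r - z‖^2 - K)| ≤ 4*ε*(ε+δ) := by
          rw [hkey]; exact gF2
        rw [abs_mul, abs_of_pos hA] at habs
        show |‖r - z‖^2 - K| ≤ V
        rw [hV, le_div_iff₀ hA]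
        linarith [habs, mul_comm (|‖r - z‖^2 - K|) (1-cL^2)]
      refine (measure_mono hsub).trans ((spdc_annulus μ σ hσ' z K V hV0).trans ?_)
      refine hfinal (Real.sqrt (2*V)) (Real.sqrt_nonneg _) ?_
      rw [← Real.sqrt_mul (by positivity) ((n:ℝ)*δ*ε)]
      apply Real.sqrt_le_sqrt
      -- 2V ≤ 2π n δ ε
      have hna : (3:ℝ)/2 ≤ (n:ℝ)*(1-cL^2) := by
        have hceq : (1 - cL^2) = (2*(ℓ:ℝ)+1)/((ℓ:ℝ)+1)^2 := by
          rw [hcL]; field_simp; ring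
        rw [hceq, ← mul_div_assoc, le_div_iff₀ (by positivity)]
        nlinarith
      have hπ : (3.141592 : ℝ) < π := Real.pi_gt_d6
      have hε4 : 4*π*ε < δ := by nlinarith
      rw [hV]
      rw [show (2:ℝ) * (4*ε*(ε+δ)/(1-cL^2)) = (8*ε*(ε+δ))/(1-cL^2) by ring,
        div_le_iff₀ hA]
      have h8 : 8*ε*ε ≤ δ*ε := by
        nlinarith [mul_lt_mul_of_pos_right hε4 hε, hπ, sq_nonneg ε]
      nlinarith [mul_le_mul_of_nonneg_right hna (show (0:ℝ) ≤ 2*π*δ*ε by positivity),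
        mul_pos hδ hε, h8]
end

section
/- Let x₁, …, x_n ∈ ℝ be independent one-dimensional Gaussian random variables with standard deviation σ > 0 and arbitrary means. The probability that there exist three distinct indices i, j, k such that x_i, x_j, x_k all lie in a common interval of length ε is at most n³·(ε/σ)². -/
open MeasureTheory ProbabilityTheory Real
open scoped ENNReal NNReal

lemma gauss_Icc_le (m : ℝ) (σ : NNReal) (hσ : 0 < σ) (t ε : ℝ) (hε : 0 ≤ ε) :
    gaussianReal m (σ ^ 2) (Set.Icc (t - ε) (t + ε)) ≤ ENNReal.ofReal (ε / σ) := by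
  have hv : (σ ^ 2 : NNReal) ≠ 0 := pow_ne_zero 2 hσ.ne'
  have hσR : (0 : ℝ) < (σ : ℝ) := hσ
  have hsqrt : (2 : ℝ) ≤ Real.sqrt (2 * π) := by
    have h4 : (4 : ℝ) ≤ 2 * π := by nlinarith [Real.pi_gt_three]
    calc (2 : ℝ) = Real.sqrt 4 := by
          rw [show (4:ℝ) = 2 ^ 2 by norm_num, Real.sqrt_sq (by norm_num)]
      _ ≤ Real.sqrt (2 * π) := Real.sqrt_le_sqrt h4
  have hC : ∀ x, gaussianPDF m (σ ^ 2) x ≤ ENNReal.ofReal ((Real.sqrt (2 * π) * σ)⁻¹) := by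
    intro x
    rw [gaussianPDF]
    apply ENNReal.ofReal_le_ofReal
    rw [gaussianPDFReal]
    have hs : Real.sqrt (2 * π * (σ ^ 2 : NNReal)) = Real.sqrt (2 * π) * σ := by
      push_cast
      rw [Real.sqrt_mul (by positivity), Real.sqrt_sq hσR.le]
    rw [hs]
    have he : Real.exp (-(x - m) ^ 2 / (2 * (σ ^ 2 : NNReal))) ≤ 1 := by
      apply Real.exp_le_one_iff.mpr
      apply div_nonpos_of_nonpos_of_nonneg (neg_nonpos.mpr (sq_nonneg _))
      positivity
    calc (Real.sqrt (2 * π) * σ)⁻¹ * Real.exp (-(x - m) ^ 2 / (2 * (σ ^ 2 : NNReal)))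
        ≤ (Real.sqrt (2 * π) * σ)⁻¹ * 1 := by
          apply mul_le_mul_of_nonneg_left he (by positivity)
      _ = (Real.sqrt (2 * π) * σ)⁻¹ := mul_one _
  calc gaussianReal m (σ ^ 2) (Set.Icc (t - ε) (t + ε))
      = ∫⁻ x in Set.Icc (t - ε) (t + ε), gaussianPDF m (σ ^ 2) x := gaussianReal_apply m hv _
    _ ≤ ∫⁻ _ in Set.Icc (t - ε) (t + ε), ENNReal.ofReal ((Real.sqrt (2 * π) * σ)⁻¹) :=
        lintegral_mono fun x => hC x
    _ = ENNReal.ofReal ((Real.sqrt (2 * π) * σ)⁻¹) * volume (Set.Icc (t - ε) (t + ε)) :=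
        setLIntegral_const _ _
    _ = ENNReal.ofReal ((Real.sqrt (2 * π) * σ)⁻¹) * ENNReal.ofReal (2 * ε) := by
        rw [Real.volume_Icc]; ring_nf
    _ = ENNReal.ofReal ((Real.sqrt (2 * π) * σ)⁻¹ * (2 * ε)) :=
        (ENNReal.ofReal_mul (by positivity)).symm
    _ ≤ ENNReal.ofReal (ε / σ) := by
        apply ENNReal.ofReal_le_ofReal
        rw [inv_mul_eq_div]
        rw [show ε / (σ : ℝ) = 2 * ε / (2 * σ) by
          rw [mul_div_mul_left _ _ (two_ne_zero)]]
        apply div_le_div_of_nonneg_left (by positivity) (by positivity)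
        · exact mul_le_mul_of_nonneg_right hsqrt hσR.le

lemma triple_bound (n : ℕ) (μ : Fin n → ℝ) (σ : NNReal) (hσ : 0 < σ) (ε : ℝ) (hε : 0 < ε)
    (i j k : Fin n) (hij : i ≠ j) (hik : i ≠ k) (hjk : j ≠ k) :
    Measure.pi (fun l => gaussianReal (μ l) (σ ^ 2))
      ((fun z : Fin n → ℝ => (z i, z j)) ⁻¹' {p : ℝ × ℝ | p.2 ∈ Set.Icc (p.1 - ε) (p.1 + ε)}
        ∩ (fun z : Fin n → ℝ => (z i, z k)) ⁻¹' {p : ℝ × ℝ | p.2 ∈ Set.Icc (p.1 - ε) (p.1 + ε)})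
      ≤ ENNReal.ofReal (ε / σ) ^ 2 := by
  classical
  set P : Fin n → Measure ℝ := fun l => gaussianReal (μ l) (σ ^ 2) with hP
  set Λ : ℝ≥0∞ := ENNReal.ofReal (ε / σ) with hΛ
  set S : Set (ℝ × ℝ) := {p : ℝ × ℝ | p.2 ∈ Set.Icc (p.1 - ε) (p.1 + ε)} with hSdef
  have hS : MeasurableSet S := by
    have : S = {p : ℝ × ℝ | p.1 - ε ≤ p.2} ∩ {p : ℝ × ℝ | p.2 ≤ p.1 + ε} := by
      ext p; simp [hSdef, Set.mem_Icc, and_comm]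
    rw [this]
    exact (measurableSet_le (measurable_fst.sub measurable_const) measurable_snd).inter
      (measurableSet_le measurable_snd (measurable_fst.add measurable_const))
  have hmap1 : Measurable fun z : Fin n → ℝ => (z i, z j) :=
    (measurable_pi_apply i).prodMk (measurable_pi_apply j)
  have hmap2 : Measurable fun z : Fin n → ℝ => (z i, z k) :=
    (measurable_pi_apply i).prodMk (measurable_pi_apply k)
  set V : Set (Fin n → ℝ) :=
    (fun z : Fin n → ℝ => (z i, z j)) ⁻¹' S ∩ (fun z : Fin n → ℝ => (z i, z k)) ⁻¹' S with hVdef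
  have hV : MeasurableSet V := (hS.preimage hmap1).inter (hS.preimage hmap2)
  set f : (Fin n → ℝ) → ℝ≥0∞ := fun z =>
    S.indicator (1 : ℝ × ℝ → ℝ≥0∞) (z i, z j) * S.indicator (1 : ℝ × ℝ → ℝ≥0∞) (z i, z k) with hfdef
  have hf : Measurable f := by
    exact ((measurable_const.indicator hS).comp hmap1).mul
      ((measurable_const.indicator hS).comp hmap2)
  have hfi : ∀ z, V.indicator (1 : (Fin n → ℝ) → ℝ≥0∞) z = f z := by
    intro z
    by_cases h1 : (z i, z j) ∈ S <;> by_cases h2 : (z i, z k) ∈ S <;>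
      simp [hfdef, hVdef, Set.indicator_apply, h1, h2]
  have hrw : ∀ t : ℝ, (fun c : ℝ => S.indicator (1 : ℝ × ℝ → ℝ≥0∞) (t, c))
      = (Set.Icc (t - ε) (t + ε)).indicator (1 : ℝ → ℝ≥0∞) := by
    intro t; ext c; simp [hSdef, Set.indicator_apply]
  have hmeas_pi : Measure.pi P V = ∫⁻ z, f z ∂Measure.pi P := by
    rw [← lintegral_indicator_one hV]
    exact lintegral_congr hfi
  rw [hmeas_pi]
  have hconst : ∫⁻ _, Λ ^ 2 ∂Measure.pi P = Λ ^ 2 := by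
    simp [lintegral_const]
  rw [← hconst]
  refine lintegral_le_of_lmarginal_le ({j, k} : Finset (Fin n)) hf measurable_const ?_
  intro x
  have hjk' : j ∉ ({k} : Finset (Fin n)) := by simp [hjk]
  have step1 : (∫⋯∫⁻_({j, k} : Finset (Fin n)), f ∂P) x
      = ∫⁻ b, (∫⋯∫⁻_({k} : Finset (Fin n)), f ∂P) (Function.update x j b) ∂P j := by
    rw [show ({j, k} : Finset (Fin n)) = insert j {k} from rfl,
      lmarginal_insert _ hf hjk']
  have hIcc : MeasurableSet (Set.Icc (x i - ε) (x i + ε)) := measurableSet_Icc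
  have hindmeas : Measurable ((Set.Icc (x i - ε) (x i + ε)).indicator (1 : ℝ → ℝ≥0∞)) :=
    measurable_const.indicator hIcc
  have hgk : P k (Set.Icc (x i - ε) (x i + ε)) ≤ Λ := gauss_Icc_le (μ k) σ hσ (x i) ε hε.le
  have hgj : P j (Set.Icc (x i - ε) (x i + ε)) ≤ Λ := gauss_Icc_le (μ j) σ hσ (x i) ε hε.le
  have hinner : ∀ b : ℝ, (∫⋯∫⁻_({k} : Finset (Fin n)), f ∂P) (Function.update x j b)
      ≤ (Set.Icc (x i - ε) (x i + ε)).indicator (1 : ℝ → ℝ≥0∞) b * Λ := by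
    intro b
    rw [lmarginal_singleton]
    have hfeval : ∀ c : ℝ, f (Function.update (Function.update x j b) k c)
        = (Set.Icc (x i - ε) (x i + ε)).indicator (1 : ℝ → ℝ≥0∞) b
          * (Set.Icc (x i - ε) (x i + ε)).indicator (1 : ℝ → ℝ≥0∞) c := by
      intro c
      have e1 : Function.update (Function.update x j b) k c i = x i := by
        rw [Function.update_of_ne hik, Function.update_of_ne hij]
      have e2 : Function.update (Function.update x j b) k c j = b := by
        rw [Function.update_of_ne hjk, Function.update_self]
      have e3 : Function.update (Function.update x j b) k c k = c := Function.update_self _ _ _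
      rw [hfdef]
      simp only [e1, e2, e3]
      rw [congrFun (hrw (x i)) b, congrFun (hrw (x i)) c]
    calc ∫⁻ c, f (Function.update (Function.update x j b) k c) ∂P k
        = ∫⁻ c, (Set.Icc (x i - ε) (x i + ε)).indicator (1 : ℝ → ℝ≥0∞) b
            * (Set.Icc (x i - ε) (x i + ε)).indicator (1 : ℝ → ℝ≥0∞) c ∂P k := by
          exact lintegral_congr hfeval
      _ = (Set.Icc (x i - ε) (x i + ε)).indicator (1 : ℝ → ℝ≥0∞) b
            * ∫⁻ c, (Set.Icc (x i - ε) (x i + ε)).indicator (1 : ℝ → ℝ≥0∞) c ∂P k :=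
          lintegral_const_mul _ hindmeas
      _ = (Set.Icc (x i - ε) (x i + ε)).indicator (1 : ℝ → ℝ≥0∞) b
            * P k (Set.Icc (x i - ε) (x i + ε)) := by rw [lintegral_indicator_one hIcc]
      _ ≤ (Set.Icc (x i - ε) (x i + ε)).indicator (1 : ℝ → ℝ≥0∞) b * Λ :=
          mul_le_mul_right hgk _
  calc (∫⋯∫⁻_({j, k} : Finset (Fin n)), f ∂P) x
      = ∫⁻ b, (∫⋯∫⁻_({k} : Finset (Fin n)), f ∂P) (Function.update x j b) ∂P j := step1
    _ ≤ ∫⁻ b, (Set.Icc (x i - ε) (x i + ε)).indicator (1 : ℝ → ℝ≥0∞) b * Λ ∂P j :=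
        lintegral_mono hinner
    _ = (∫⁻ b, (Set.Icc (x i - ε) (x i + ε)).indicator (1 : ℝ → ℝ≥0∞) b ∂P j) * Λ :=
        lintegral_mul_const _ hindmeas
    _ = P j (Set.Icc (x i - ε) (x i + ε)) * Λ := by rw [lintegral_indicator_one hIcc]
    _ ≤ Λ * Λ := mul_le_mul_left hgj _
    _ = Λ ^ 2 := (sq Λ).symm
    _ ≤ (∫⋯∫⁻_({j, k} : Finset (Fin n)), (fun _ => Λ ^ 2) ∂P) x := by
        rw [lmarginal]; simp [lintegral_const]


theorem three_points_in_interval_prob (n : ℕ) (μ : Fin n → ℝ) (σ : NNReal)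
    (hσ : 0 < σ) (ε : ℝ) (hε : 0 < ε) :
    Measure.pi (fun i : Fin n => gaussianReal (μ i) (σ ^ 2))
      {x : Fin n → ℝ |
        ∃ i j k : Fin n, i ≠ j ∧ i ≠ k ∧ j ≠ k ∧
          ∃ a : ℝ, x i ∈ Set.Icc a (a + ε) ∧ x j ∈ Set.Icc a (a + ε) ∧
            x k ∈ Set.Icc a (a + ε)} ≤
      ENNReal.ofReal ((n : ℝ) ^ 3 * (ε / σ) ^ 2) := by
  classical
  set P : Fin n → Measure ℝ := fun l => gaussianReal (μ l) (σ ^ 2) with hP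
  set Λ : ℝ≥0∞ := ENNReal.ofReal (ε / σ) with hΛ
  set S : Set (ℝ × ℝ) := {p : ℝ × ℝ | p.2 ∈ Set.Icc (p.1 - ε) (p.1 + ε)} with hSdef
  set W : Fin n → Fin n → Fin n → Set (Fin n → ℝ) := fun i j k =>
    {x | (i ≠ j ∧ i ≠ k ∧ j ≠ k) ∧
      x ∈ (fun z : Fin n → ℝ => (z i, z j)) ⁻¹' S ∩ (fun z : Fin n → ℝ => (z i, z k)) ⁻¹' S}
    with hWdef
  have hW : ∀ i j k, Measure.pi P (W i j k) ≤ Λ ^ 2 := by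
    intro i j k
    by_cases hd : i ≠ j ∧ i ≠ k ∧ j ≠ k
    · have : W i j k =
          (fun z : Fin n → ℝ => (z i, z j)) ⁻¹' S ∩ (fun z : Fin n → ℝ => (z i, z k)) ⁻¹' S := by
        ext z; simp [hWdef, hd]
      rw [this]
      exact triple_bound n μ σ hσ ε hε i j k hd.1 hd.2.1 hd.2.2
    · have : W i j k = ∅ := by
        ext z; simp only [hWdef, Set.mem_setOf_eq, Set.mem_empty_iff_false, iff_false]
        intro h; exact hd h.1
      rw [this]; simp
  have hsub : {x : Fin n → ℝ |
        ∃ i j k : Fin n, i ≠ j ∧ i ≠ k ∧ j ≠ k ∧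
          ∃ a : ℝ, x i ∈ Set.Icc a (a + ε) ∧ x j ∈ Set.Icc a (a + ε) ∧
            x k ∈ Set.Icc a (a + ε)} ⊆ ⋃ i, ⋃ j, ⋃ k, W i j k := by
    rintro x ⟨i, j, k, hij, hik, hjk, a, h1, h2, h3⟩
    simp only [Set.mem_Icc] at h1 h2 h3
    refine Set.mem_iUnion.mpr ⟨i, Set.mem_iUnion.mpr ⟨j, Set.mem_iUnion.mpr ⟨k, ?_⟩⟩⟩
    refine ⟨⟨hij, hik, hjk⟩, ?_, ?_⟩
    · simp only [Set.mem_preimage, hSdef, Set.mem_setOf_eq, Set.mem_Icc]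
      constructor <;> linarith [h1.1, h1.2, h2.1, h2.2]
    · simp only [Set.mem_preimage, hSdef, Set.mem_setOf_eq, Set.mem_Icc]
      constructor <;> linarith [h1.1, h1.2, h3.1, h3.2]
  calc Measure.pi P {x : Fin n → ℝ |
        ∃ i j k : Fin n, i ≠ j ∧ i ≠ k ∧ j ≠ k ∧
          ∃ a : ℝ, x i ∈ Set.Icc a (a + ε) ∧ x j ∈ Set.Icc a (a + ε) ∧
            x k ∈ Set.Icc a (a + ε)}
      ≤ Measure.pi P (⋃ i, ⋃ j, ⋃ k, W i j k) := measure_mono hsub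
    _ ≤ ∑' (i : Fin n), ∑' (j : Fin n), ∑' (k : Fin n), Measure.pi P (W i j k) := by
        refine (measure_iUnion_le _).trans (ENNReal.tsum_le_tsum fun i => ?_)
        refine (measure_iUnion_le _).trans (ENNReal.tsum_le_tsum fun j => ?_)
        exact measure_iUnion_le _
    _ ≤ ∑' (_ : Fin n), ∑' (_ : Fin n), ∑' (_ : Fin n), Λ ^ 2 := by
        refine ENNReal.tsum_le_tsum fun i => ENNReal.tsum_le_tsum fun j =>
          ENNReal.tsum_le_tsum fun k => hW i j k
    _ = (n : ℝ≥0∞) ^ 3 * Λ ^ 2 := by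
        simp [tsum_fintype, Finset.sum_const, nsmul_eq_mul]
        ring
    _ = ENNReal.ofReal ((n : ℝ) ^ 3 * (ε / σ) ^ 2) := by
        rw [hΛ, ← ENNReal.ofReal_pow (div_nonneg hε.le σ.coe_nonneg)]
        rw [show ((n : ℝ≥0∞)) ^ 3 = ENNReal.ofReal ((n : ℝ) ^ 3) by
          rw [ENNReal.ofReal_pow (by positivity), ENNReal.ofReal_natCast]]
        rw [← ENNReal.ofReal_mul (by positivity)]
end

section
/- Let A, B be disjoint finite nonempty sets of real numbers with max A < min B, |A| ≥ 2, |A ∪ B| ≤ n, and suppose no interval of length ε contains three or more points of A ∪ B. Then the center of mass of A ∪ B satisfies mass(A ∪ B) ≥ mass(A) + ε/(2n). -/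
/-- The center of mass of a finite set of reals. -/
noncomputable def mass (S : Finset ℝ) : ℝ := (S.card : ℝ)⁻¹ * ∑ x ∈ S, x

theorem centroid_shift_of_sparse (n : ℕ) (hn : 0 < n) (ε : ℝ) (hε : 0 < ε)
    (A B : Finset ℝ) (hA : A.Nonempty) (hB : B.Nonempty)
    (hdisj : Disjoint A B) (hAB : A.max' hA < B.min' hB)
    (hcardA : 2 ≤ A.card) (hcard : (A ∪ B).card ≤ n)
    (hsparse : ∀ x ∈ A ∪ B, ∀ y ∈ A ∪ B, ∀ z ∈ A ∪ B,
      x ≠ y → x ≠ z → y ≠ z →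
      ¬ ∃ a : ℝ, x ∈ Set.Icc a (a + ε) ∧ y ∈ Set.Icc a (a + ε) ∧
        z ∈ Set.Icc a (a + ε)) :
    mass (A ∪ B) ≥ mass A + ε / (2 * n) := by
  classical
  set x₂ := A.max' hA with hx2def
  set x₃ := B.min' hB with hx3def
  have hx2A : x₂ ∈ A := A.max'_mem hA
  have hA' : (A.erase x₂).Nonempty := by
    rw [← Finset.card_pos, Finset.card_erase_of_mem hx2A]
    omega
  set x₁ := (A.erase x₂).max' hA' with hx1def
  have hx1E : x₁ ∈ A.erase x₂ := Finset.max'_mem _ _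
  have hx1A : x₁ ∈ A := Finset.mem_of_mem_erase hx1E
  have hx12 : x₁ < x₂ :=
    lt_of_le_of_ne (A.le_max' _ hx1A) (Finset.ne_of_mem_erase hx1E)
  have hx3B : x₃ ∈ B := B.min'_mem hB
  have hx23 : x₂ < x₃ := hAB
  have hgap : x₁ + ε < x₃ := by
    by_contra h
    push_neg at h
    exact hsparse x₁ (Finset.mem_union_left _ hx1A) x₂ (Finset.mem_union_left _ hx2A)
      x₃ (Finset.mem_union_right _ hx3B) (ne_of_lt hx12) (ne_of_lt (hx12.trans hx23))
      (ne_of_lt hx23)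
      ⟨x₁, ⟨le_refl _, by linarith⟩, ⟨hx12.le, by linarith⟩,
        ⟨by linarith [hx12.trans hx23], h⟩⟩
  -- sum bounds
  have hSA' : ∑ x ∈ A.erase x₂, x ≤ ((A.erase x₂).card : ℝ) * x₁ := by
    have := Finset.sum_le_card_nsmul (A.erase x₂) id x₁
      (fun x hx => Finset.le_max' _ x hx)
    simpa [nsmul_eq_mul] using this
  have hcardE : ((A.erase x₂).card : ℝ) = (A.card : ℝ) - 1 := by
    rw [Finset.card_erase_of_mem hx2A]
    have : 1 ≤ A.card := le_trans (by norm_num) hcardA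
    push_cast [Nat.cast_sub this]
    ring
  have hsumA : ∑ x ∈ A, x = x₂ + ∑ x ∈ A.erase x₂, x :=
    (Finset.add_sum_erase _ _ hx2A).symm
  have hSB : (B.card : ℝ) * x₃ ≤ ∑ x ∈ B, x := by
    have := Finset.card_nsmul_le_sum B id x₃ (fun x hx => B.min'_le x hx)
    simpa [nsmul_eq_mul] using this
  set α : ℝ := (A.card : ℝ) with hα
  set β : ℝ := (B.card : ℝ) with hβ
  have hα2 : (2 : ℝ) ≤ α := by rw [hα]; exact_mod_cast hcardA
  have hβ1 : (1 : ℝ) ≤ β := by rw [hβ]; exact_mod_cast hB.card_pos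
  have hcardU : (A ∪ B).card = A.card + B.card := Finset.card_union_of_disjoint hdisj
  have hαβn : α + β ≤ (n : ℝ) := by
    rw [hα, hβ, ← Nat.cast_add]
    exact_mod_cast hcardU ▸ hcard
  have hSAle : ∑ x ∈ A, x ≤ α * x₃ - (α - 1) * ε := by
    rw [hsumA]
    have h1 : ∑ x ∈ A.erase x₂, x ≤ (α - 1) * x₁ := by rw [← hcardE]; exact hSA'
    nlinarith [hα2, hgap, hx23]
  have hsumU : ∑ x ∈ A ∪ B, x = ∑ x ∈ A, x + ∑ x ∈ B, x := Finset.sum_union hdisj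
  rw [mass, mass, hcardU, hsumU]
  push_cast
  rw [ge_iff_le, inv_mul_eq_div, inv_mul_eq_div,
    div_add_div _ _ (by positivity : α ≠ 0) (by positivity : (2 * (n : ℝ)) ≠ 0),
    div_le_div_iff₀ (by positivity) (by positivity)]
  set SA := ∑ x ∈ A, x
  set SB := ∑ x ∈ B, x
  have hnpos : (0 : ℝ) < n := by exact_mod_cast hn
  have heq : ((A.card : ℝ) + (B.card : ℝ)) = α + β := rfl
  nlinarith [heq, mul_le_mul_of_nonneg_right hβ1 (by positivity : (0:ℝ) ≤ ε * n * α),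
    mul_le_mul_of_nonneg_left hSAle (by positivity : (0:ℝ) ≤ 2 * n * β),
    mul_le_mul_of_nonneg_left hSB (by positivity : (0:ℝ) ≤ 2 * n * α),
    mul_le_mul_of_nonneg_left hαβn (by positivity : (0:ℝ) ≤ ε * α),
    mul_pos hε hnpos, mul_le_mul_of_nonneg_right hα2 (by positivity : (0:ℝ) ≤ ε * n * β)]
end
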